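/- Every reserve system admits a matching that is eligibility-compliant, respects priorities, is non-wasteful, and has maximum cardinality. -/

import Mathlib

open Finset

variable {I C : Type*}

/-- Agent `i` is eligible for category `c` when `i ≻_c ∅`. -/
def Eligible (prio : C → Option I → Option I → Prop) (i : I) (c : C) : Prop :=
  prio c (some i) none

/-- `μ` is a matching: the set of agents assigned to each category `c`
has at most `q c` elements. -/
def IsMatching [Fintype I] [DecidableEq C] (q : C → ℕ) (μ : I → Option C) : Prop :=
  ∀ c : C, (Finset.univ.filter (fun i => μ i = some c)).card ≤ q c

/-- `μ` is eligibility-compliant: assigned agents are eligible. -/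
def Compliant (prio : C → Option I → Option I → Prop) (μ : I → Option C) : Prop :=
  ∀ (i : I) (c : C), μ i = some c → Eligible prio i c

/-- The number of agents matched under `μ`. -/
def matchedCount [Fintype I] (μ : I → Option C) : ℕ :=
  (Finset.univ.filter (fun i => (μ i).isSome)).card

/-- `μ` has maximum cardinality among eligibility-compliant matchings. -/
def MaxCard [Fintype I] [DecidableEq C] (q : C → ℕ)
    (prio : C → Option I → Option I → Prop) (μ : I → Option C) : Prop :=
  ∀ μ' : I → Option C, IsMatching q μ' → Compliant prio μ' →
    matchedCount μ' ≤ matchedCount μ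

/-- Non-wastefulness: an eligible unmatched agent implies the category is full. -/
def NonWasteful [Fintype I] [DecidableEq C] (q : C → ℕ)
    (prio : C → Option I → Option I → Prop) (μ : I → Option C) : Prop :=
  ∀ (i : I) (c : C), Eligible prio i c → μ i = none →
    (Finset.univ.filter (fun j => μ j = some c)).card = q c

/-- Respect for priorities: a matched agent has higher priority (at its
category) than every unmatched agent. -/
def RespectsPriorities (prio : C → Option I → Option I → Prop)
    (μ : I → Option C) : Prop :=
  ∀ (i i' : I) (c : C), μ i = some c → μ i' = none → prio c (some i) (some i')

/-- `μ'` is obtained from `μ` by a swap step at category `c`: an unmatched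
agent `i`, eligible for `c`, replaces the `≻_c`-least agent `i'` currently
assigned to `c`, where `i ≻_c i'`. -/
def SwapStep (prio : C → Option I → Option I → Prop) (c : C)
    (μ μ' : I → Option C) : Prop :=
  ∃ i i' : I,
    μ i = none ∧ Eligible prio i c ∧
    μ i' = some c ∧
    (∀ j : I, μ j = some c → j ≠ i' → prio c (some j) (some i')) ∧
    prio c (some i) (some i') ∧
    μ' i = some c ∧ μ' i' = none ∧
    (∀ j : I, j ≠ i → j ≠ i' → μ' j = μ j)

/-- One swap step between eligibility-compliant matchings. -/
def SwapRel [Fintype I] [DecidableEq C] (q : C → ℕ)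
    (prio : C → Option I → Option I → Prop) (μ μ' : I → Option C) : Prop :=
  IsMatching q μ ∧ Compliant prio μ ∧ IsMatching q μ' ∧ Compliant prio μ' ∧
    ∃ c : C, SwapStep prio c μ μ'

/-- `μ` is terminal: no swap step applies to `μ`. -/
def Terminal (prio : C → Option I → Option I → Prop) (μ : I → Option C) : Prop :=
  ¬ ∃ (i i' : I) (c : C),
      μ i = none ∧ Eligible prio i c ∧ μ i' = some c ∧
      (∀ j : I, μ j = some c → j ≠ i' → prio c (some j) (some i')) ∧
      prio c (some i) (some i')

/-- The strict part `▷` of the precedence preorder, extended to `C ∪ {∅}`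
by `c ▷ ∅` for every category `c`. -/
def StrictPrec (prec : C → C → Prop) : Option C → Option C → Prop
  | some c, some c' => prec c c' ∧ ¬ prec c' c
  | some _, none => True
  | none, _ => False

/-- The number of agents assigned to preferential treatment categories. -/
def benefCount [Fintype I] [DecidableEq C] (Cstar : Finset C)
    (μ : I → Option C) : ℕ :=
  ∑ c ∈ Cstar, (Finset.univ.filter (fun i => μ i = some c)).card

/-- `μ` is a maximum beneficiary assignment. -/
def MaxBenef [Fintype I] [DecidableEq C] (q : C → ℕ)
    (prio : C → Option I → Option I → Prop) (Cstar : Finset C)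
    (μ : I → Option C) : Prop :=
  ∀ μ' : I → Option C, IsMatching q μ' → Compliant prio μ' →
    benefCount Cstar μ' ≤ benefCount Cstar μ

/-- Order preservation by swapping. -/
def OrderPresSwap (prio : C → Option I → Option I → Prop) (prec : C → C → Prop)
    (μ : I → Option C) : Prop :=
  ¬ ∃ (i j : I) (ci cj : C),
      μ i = some ci ∧ μ j = some cj ∧
      StrictPrec prec (some cj) (some ci) ∧
      prio cj (some i) (some j) ∧
      Eligible prio j ci ∧ Eligible prio i cj

/-- Respect for precedence over categories. -/
def RespectsPrec [Fintype I] [DecidableEq C] (q : C → ℕ)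
    (prio : C → Option I → Option I → Prop) (Cstar : Finset C)
    (prec : C → C → Prop) (μ : I → Option C) : Prop :=
  ¬ ∃ (i j : I) (cj : C),
      μ j = some cj ∧
      StrictPrec prec (some cj) (μ i) ∧
      prio cj (some i) (some j) ∧
      ∃ μ' : I → Option C,
        IsMatching q μ' ∧ Compliant prio μ' ∧
        (∀ (k : I) (ck : C), μ k = some ck →
          StrictPrec prec (some ck) (some cj) → μ' k = μ k) ∧
        (∀ ℓ : I, μ ℓ = some cj → prio cj (some ℓ) (some i) → μ' ℓ = μ ℓ) ∧
        μ' i = some cj ∧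
        MaxCard q prio μ' ∧ MaxBenef q prio Cstar μ'

/-- Order preservation for a hybrid sequential reserve system with open
categories `c01` (processed first) and `c02` (processed last). -/
def OrderPresHybrid (prio : C → Option I → Option I → Prop) (Cstar : Finset C)
    (c01 c02 : C) (μ : I → Option C) : Prop :=
  ∀ (i j : I) (cj : C), μ j = some cj → prio cj (some i) (some j) →
    ((∀ ci : C, μ i = some ci → (ci ∈ Cstar ∨ ci = c02) →
        Eligible prio j ci → cj ≠ c01) ∧
     ((cj ∈ Cstar ∨ cj = c01) → Eligible prio i cj → μ i ≠ some c02))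

/-- `P'` is an `i`-improvement of `P`: the orders agree off `i`, and `i`'s
priority weakly increases in every category. -/
def Improves (i : I) (P P' : C → Option I → Option I → Prop) : Prop :=
  ∀ c : C,
    (∀ x y : Option I, x ≠ some i → y ≠ some i → (P' c x y ↔ P c x y)) ∧
    (∀ x : Option I, x ≠ some i → P c (some i) x → P' c (some i) x)

section Aux

open Classical in
/-- The rank of agent `i` in category `c`: the number of elements it beats. -/
noncomputable def rnk [Fintype I] (prio : C → Option I → Option I → Prop)
    (c : C) (i : I) : ℕ :=
  (Finset.univ.filter (fun x : Option I => prio c (some i) x)).card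

open Classical in
/-- Total rank score of a matching. -/
noncomputable def scr [Fintype I] (prio : C → Option I → Option I → Prop)
    (μ : I → Option C) : ℕ :=
  ∑ i, Option.elim (μ i) 0 (fun c => rnk prio c i)

lemma rnk_le [Fintype I] (prio : C → Option I → Option I → Prop) (c : C) (i : I) :
    rnk prio c i ≤ Fintype.card (Option I) := by
  classical
  exact le_trans (card_le_card (filter_subset _ _)) (le_of_eq Finset.card_univ)

lemma scr_le [Fintype I] (prio : C → Option I → Option I → Prop) (μ : I → Option C) :
    scr prio μ ≤ Fintype.card I * Fintype.card (Option I) := by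
  classical
  have h : ∀ i ∈ (Finset.univ : Finset I),
      Option.elim (μ i) 0 (fun c => rnk prio c i) ≤ Fintype.card (Option I) := by
    intro i _
    cases h : μ i with
    | none => simp
    | some c => simpa using rnk_le prio c i
  calc scr prio μ ≤ (Finset.univ : Finset I).card * Fintype.card (Option I) := by
        simpa [mul_comm, scr] using Finset.sum_le_card_nsmul _ _ _ h
    _ = Fintype.card I * Fintype.card (Option I) := by rw [Finset.card_univ]

lemma sum_swap_eq [Fintype I] (f g : I → ℕ) (i i' : I) (hne : i ≠ i')
    (h : ∀ j, j ≠ i → j ≠ i' → f j = g j) :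
    (∑ j, f j) + (g i + g i') = (∑ j, g j) + (f i + f i') := by
  classical
  have hi : i ∈ (Finset.univ : Finset I) := mem_univ i
  have hi' : i' ∈ (Finset.univ.erase i) := by simp [Ne.symm hne]
  have hf : (∑ j, f j) =
      (∑ j ∈ (Finset.univ.erase i).erase i', f j) + f i' + f i := by
    rw [Finset.sum_erase_add _ _ hi', Finset.sum_erase_add _ _ hi]
  have hg : (∑ j, g j) =
      (∑ j ∈ (Finset.univ.erase i).erase i', g j) + g i' + g i := by
    rw [Finset.sum_erase_add _ _ hi', Finset.sum_erase_add _ _ hi]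
  have hfg : (∑ j ∈ (Finset.univ.erase i).erase i', f j) =
      (∑ j ∈ (Finset.univ.erase i).erase i', g j) := by
    refine Finset.sum_congr rfl ?_
    intro j hj
    simp only [Finset.mem_erase, Finset.mem_univ, and_true] at hj
    exact h j hj.2 hj.1
  omega

end Aux

/-- Every reserve system admits a matching that is
eligibility-compliant, respects priorities, is non-wasteful, and has
maximum cardinality. -/
theorem exists_matching_four_axioms
    [Fintype I] [Fintype C] [DecidableEq C]
    (q : C → ℕ) (prio : C → Option I → Option I → Prop)
    (hstrict : ∀ c : C, IsStrictTotalOrder (Option I) (prio c)) :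
    ∃ μ : I → Option C,
      IsMatching q μ ∧ Compliant prio μ ∧ RespectsPriorities prio μ ∧
        NonWasteful q prio μ ∧ MaxCard q prio μ := by
  classical
  set B := Fintype.card I * Fintype.card (Option I) with hB
  set phi : (I → Option C) → ℕ :=
    fun μ => matchedCount μ * (B + 1) + scr prio μ with hphi
  set S : Finset (I → Option C) :=
    Finset.univ.filter (fun μ => IsMatching q μ ∧ Compliant prio μ) with hSdef
  have hS0 : (fun _ => (none : Option C)) ∈ S := by
    simp only [hSdef, mem_filter, mem_univ, true_and]
    refine ⟨fun c => ?_, fun i c h => by simp at h⟩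
    simp [IsMatching]
  obtain ⟨μ, hμS, hmax⟩ := Finset.exists_max_image S phi ⟨_, hS0⟩
  simp only [hSdef, mem_filter, mem_univ, true_and] at hμS
  obtain ⟨hM, hC⟩ := hμS
  have hmax' : ∀ μ', IsMatching q μ' → Compliant prio μ' → phi μ' ≤ phi μ := by
    intro μ' h1 h2
    exact hmax μ' (by simp [hSdef, h1, h2])
  -- max cardinality
  have hMaxCard : MaxCard q prio μ := by
    intro μ' h1 h2
    by_contra hlt
    push_neg at hlt
    have hs : scr prio μ ≤ B := scr_le prio μ
    have hp := hmax' μ' h1 h2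
    have h1' : (matchedCount μ + 1) * (B + 1) ≤ matchedCount μ' * (B + 1) :=
      Nat.mul_le_mul_right _ hlt
    have : phi μ < phi μ' := by
      have : matchedCount μ * (B + 1) + scr prio μ < (matchedCount μ + 1) * (B + 1) := by
        have : scr prio μ < B + 1 := Nat.lt_succ_of_le hs
        nlinarith
      calc phi μ = matchedCount μ * (B + 1) + scr prio μ := rfl
        _ < (matchedCount μ + 1) * (B + 1) := this
        _ ≤ matchedCount μ' * (B + 1) := h1'
        _ ≤ phi μ' := Nat.le_add_right _ _
    omega
  -- non-wastefulness
  have hNW : NonWasteful q prio μ := by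
    intro i c helig hnone
    by_contra hne
    have hlt : (Finset.univ.filter (fun j => μ j = some c)).card < q c :=
      lt_of_le_of_ne (hM c) hne
    set μ'' : I → Option C := fun j => if j = i then some c else μ j with hμ''
    have hC'' : Compliant prio μ'' := by
      intro j c' hj
      by_cases hji : j = i
      · subst hji
        simp only [hμ'', if_pos rfl] at hj
        obtain rfl : c = c' := by injection hj
        exact helig
      · exact hC j c' (by simpa [hμ'', hji] using hj)
    have hM'' : IsMatching q μ'' := by
      intro c'
      by_cases hcc : c' = c
      · subst hcc
        have heq : Finset.univ.filter (fun j => μ'' j = some c')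
            = insert i (Finset.univ.filter (fun j => μ j = some c')) := by
          ext j
          by_cases hji : j = i
          · subst hji; simp [hμ'']
          · simp [hμ'', hji]
        have hni : i ∉ Finset.univ.filter (fun j => μ j = some c') := by
          simp [hnone]
        rw [heq, Finset.card_insert_of_notMem hni]
        omega
      · have heq : Finset.univ.filter (fun j => μ'' j = some c')
            = Finset.univ.filter (fun j => μ j = some c') := by
          apply Finset.filter_congr
          intro j _
          by_cases hji : j = i
          · subst hji
            have hcc' : c ≠ c' := fun h => hcc h.symm
            simp [hμ'', hnone, hcc']
          · simp [hμ'', hji]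
        rw [heq]; exact hM c'
    have hcount : matchedCount μ'' = matchedCount μ + 1 := by
      unfold matchedCount
      have heq : Finset.univ.filter (fun j => (μ'' j).isSome)
          = insert i (Finset.univ.filter (fun j => (μ j).isSome)) := by
        ext j
        by_cases hji : j = i
        · subst hji; simp [hμ'']
        · simp [hμ'', hji]
      have hni : i ∉ Finset.univ.filter (fun j => (μ j).isSome) := by
        simp [hnone]
      rw [heq, Finset.card_insert_of_notMem hni]
    have := hMaxCard μ'' hM'' hC''
    omega
  -- respects priorities
  have hRP : RespectsPriorities prio μ := by
    intro i i' c hi hi'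
    haveI := hstrict c
    rcases trichotomous_of (prio c) (some i) (some i') with h | h | h
    · exact h
    · exfalso
      obtain rfl : i = i' := by injection h
      rw [hi] at hi'; exact nomatch hi'
    · -- swap i' in for i: contradiction with optimality
      exfalso
      have hne : i ≠ i' := by
        rintro rfl
        rw [hi] at hi'; exact nomatch hi'
      have heligi : Eligible prio i c := hC i c hi
      have heligi' : Eligible prio i' c := trans_of (prio c) h heligi
      set μ'' : I → Option C := fun j => if j = i' then some c else if j = i then none else μ j
        with hμ''
      have hμ''i : μ'' i = none := by simp [hμ'', hne]
      have hμ''i' : μ'' i' = some c := by simp [hμ'']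
      have hμ''off : ∀ j, j ≠ i → j ≠ i' → μ'' j = μ j := by
        intro j h1 h2; simp [hμ'', h1, h2]
      have hC'' : Compliant prio μ'' := by
        intro j c' hj
        by_cases h2 : j = i'
        · subst h2
          rw [hμ''i'] at hj
          obtain rfl : c = c' := by injection hj
          exact heligi'
        · by_cases h1 : j = i
          · subst h1; rw [hμ''i] at hj; exact nomatch hj
          · exact hC j c' (by rwa [hμ''off j h1 h2] at hj)
      have hi'none : μ i' = none := hi'
      have hcardeq : ∀ c', (Finset.univ.filter (fun j => μ'' j = some c')).card
          = (Finset.univ.filter (fun j => μ j = some c')).card := by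
        intro c'
        by_cases hcc : c' = c
        · subst hcc
          have heq : Finset.univ.filter (fun j => μ'' j = some c')
              = insert i' ((Finset.univ.filter (fun j => μ j = some c')).erase i) := by
            ext j
            by_cases h2 : j = i'
            · subst h2; simp [hμ''i']
            · by_cases h1 : j = i
              · subst h1; simp [hμ''i, hi, Ne.symm h2, h2]
              · simp [hμ''off j h1 h2, h2, h1]
          have hmemi : i ∈ Finset.univ.filter (fun j => μ j = some c') := by simp [hi]
          have hni' : i' ∉ (Finset.univ.filter (fun j => μ j = some c')).erase i := by
            simp [hi'none]
          rw [heq, Finset.card_insert_of_notMem hni', Finset.card_erase_of_mem hmemi]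
          have : 1 ≤ (Finset.univ.filter (fun j => μ j = some c')).card :=
            Finset.card_pos.mpr ⟨i, hmemi⟩
          omega
        · have heq : Finset.univ.filter (fun j => μ'' j = some c')
              = Finset.univ.filter (fun j => μ j = some c') := by
            apply Finset.filter_congr
            intro j _
            by_cases h2 : j = i'
            · subst h2
              have hcc' : c ≠ c' := fun h => hcc h.symm
              simp [hμ''i', hi'none, hcc']
            · by_cases h1 : j = i
              · subst h1
                have hcc' : c ≠ c' := fun h => hcc h.symm
                simp [hμ''i, hi, hcc']
              · rw [hμ''off j h1 h2]
          rw [heq]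
      have hM'' : IsMatching q μ'' := fun c' => (hcardeq c') ▸ hM c'
      have hcount : matchedCount μ'' = matchedCount μ := by
        unfold matchedCount
        have heq : Finset.univ.filter (fun j => (μ'' j).isSome)
            = insert i' ((Finset.univ.filter (fun j => (μ j).isSome)).erase i) := by
          ext j
          by_cases h2 : j = i'
          · subst h2; simp [hμ''i']
          · by_cases h1 : j = i
            · subst h1; simp [hμ''i, hi, Ne.symm h2, h2]
            · simp [hμ''off j h1 h2, h2, h1]
        have hmemi : i ∈ Finset.univ.filter (fun j => (μ j).isSome) := by simp [hi]
        have hni' : i' ∉ (Finset.univ.filter (fun j => (μ j).isSome)).erase i := by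
          simp [hi'none]
        rw [heq, Finset.card_insert_of_notMem hni', Finset.card_erase_of_mem hmemi]
        have : 1 ≤ (Finset.univ.filter (fun j => (μ j).isSome)).card :=
          Finset.card_pos.mpr ⟨i, hmemi⟩
        omega
      -- score strictly increases
      have hrnk : rnk prio c i < rnk prio c i' := by
        classical
        apply Finset.card_lt_card
        rw [Finset.ssubset_iff_of_subset]
        · refine ⟨some i, ?_, ?_⟩
          · simp [h]
          · simp [irrefl_of (prio c) (some i)]
        · intro x hx
          simp only [Finset.mem_filter, Finset.mem_univ, true_and] at hx ⊢
          exact trans_of (prio c) h hx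
      have hscr : scr prio μ + rnk prio c i' = scr prio μ'' + rnk prio c i := by
        have := sum_swap_eq (fun j => Option.elim (μ j) 0 (fun c' => rnk prio c' j))
          (fun j => Option.elim (μ'' j) 0 (fun c' => rnk prio c' j)) i i' hne
          (fun j h1 h2 => by simp only [hμ''off j h1 h2])
        simpa [scr, hi, hi'none, hμ''i, hμ''i'] using this
      have hlt : phi μ < phi μ'' := by
        have : scr prio μ < scr prio μ'' := by omega
        simp only [hphi, hcount]
        omega
      have := hmax' μ'' hM'' hC''
      omega
  exact ⟨μ, hM, hC, hRP, hNW, hMaxCard⟩
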